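/- (Phillips) Let A ∈ M₃(ℂ) satisfy Aᴴ·J·A = J, (A − 1)³ = 0, and A ≠ 1 (i.e. A is a nontrivial unipotent isometry), and let p₀ ∈ ℂ³ satisfy ⟨p₀, p₀⟩ < 0 (a real negative number). Then the bisectors B(p₀, A·p₀) and B(p₀, A⁻¹·p₀) are disjoint: there is no z ∈ ℂ³ with ⟨z, z⟩ < 0, |⟨z, p₀⟩| = |⟨z, A·p₀⟩|, and |⟨z, p₀⟩| = |⟨z, A⁻¹·p₀⟩|. -/

import Mathlib

noncomputable section

open Matrix

/-- The matrix of the Hermitian form of signature (2,1). -/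
def Jmat : Matrix (Fin 3) (Fin 3) ℂ := !![0,0,1; 0,1,0; 1,0,0]

/-- Hermitian form ⟨Z,W⟩ = Z₁·conj(W₃) + Z₂·conj(W₂) + Z₃·conj(W₁). -/
def herm (Z W : Fin 3 → ℂ) : ℂ :=
  Z 0 * (starRingEnd ℂ) (W 2) + Z 1 * (starRingEnd ℂ) (W 1) + Z 2 * (starRingEnd ℂ) (W 0)

lemma herm_eq (x y : Fin 3 → ℂ) : herm x y = (Jmat *ᵥ x) ⬝ᵥ star y := by
  simp [herm, Jmat, mulVec, dotProduct, Fin.sum_univ_three, Matrix.vecHead, Matrix.vecTail]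
  ring

lemma herm_add_right (x y z : Fin 3 → ℂ) : herm x (y + z) = herm x y + herm x z := by
  simp [herm]; ring

lemma herm_sub_right (x y z : Fin 3 → ℂ) : herm x (y - z) = herm x y - herm x z := by
  simp [herm]; ring

lemma herm_add_left (x y z : Fin 3 → ℂ) : herm (x + y) z = herm x z + herm y z := by
  simp [herm]; ring

lemma herm_sub_left (x y z : Fin 3 → ℂ) : herm (x - y) z = herm x z - herm y z := by
  simp [herm]; ring

lemma herm_smul_left (c : ℂ) (x y : Fin 3 → ℂ) : herm (c • x) y = c * herm x y := by
  simp [herm]; ring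

lemma herm_smul_right (c : ℂ) (x y : Fin 3 → ℂ) :
    herm x (c • y) = (starRingEnd ℂ) c * herm x y := by
  simp [herm]; ring

lemma herm_conj (x y : Fin 3 → ℂ) : herm x y = (starRingEnd ℂ) (herm y x) := by
  simp [herm]; ring

lemma herm_zero_left (y : Fin 3 → ℂ) : herm 0 y = 0 := by simp [herm]

lemma herm_zero_right (y : Fin 3 → ℂ) : herm y 0 = 0 := by simp [herm]

/-- skew-adjointness with respect to the form. -/
lemma skew (M : Matrix (Fin 3) (Fin 3) ℂ) (h : Mᴴ * Jmat = -(Jmat * M)) (x y : Fin 3 → ℂ) :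
    herm (M *ᵥ x) y = - herm x (M *ᵥ y) := by
  rw [herm_eq, herm_eq]
  calc (Jmat *ᵥ (M *ᵥ x)) ⬝ᵥ star y = ((Jmat*M) *ᵥ x) ⬝ᵥ star y := by rw [mulVec_mulVec]
    _ = -(star y ⬝ᵥ ((-(Jmat*M)) *ᵥ x)) := by
        rw [neg_mulVec, dotProduct_neg, neg_neg, dotProduct_comm]
    _ = -(star y ⬝ᵥ ((Mᴴ * Jmat) *ᵥ x)) := by rw [h]
    _ = -(star y ⬝ᵥ (Mᴴ *ᵥ (Jmat *ᵥ x))) := by rw [mulVec_mulVec]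
    _ = -((star y ᵥ* Mᴴ) ⬝ᵥ (Jmat *ᵥ x)) := by rw [dotProduct_mulVec]
    _ = -((Jmat *ᵥ x) ⬝ᵥ (star y ᵥ* Mᴴ)) := by rw [dotProduct_comm]
    _ = -((Jmat *ᵥ x) ⬝ᵥ star (M *ᵥ y)) := by rw [star_mulVec]

/-- Key positivity lemma: the orthogonal complement of a nonzero null vector is
positive semidefinite, with kernel spanned by the null vector. -/
lemma key (v w : Fin 3 → ℂ) (hv0 : v ≠ 0) (hvv : herm v v = 0) (hwv : herm w v = 0) :
    0 ≤ (herm w w).re ∧ ((herm w w).re = 0 → ∃ t : ℂ, w = t • v) := by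
  by_cases hv2 : v 2 = 0
  · have hv1 : v 1 = 0 := by
      have h := hvv
      simp only [herm, hv2, map_zero, mul_zero, zero_mul, add_zero, zero_add] at h
      rcases mul_eq_zero.1 h with h' | h'
      · exact h'
      · simpa using congrArg (starRingEnd ℂ) h'
    have hv00 : v 0 ≠ 0 := by
      intro h0
      apply hv0
      funext i
      fin_cases i <;> simp [h0, hv1, hv2]
    have hw2 : w 2 = 0 := by
      have h := hwv
      simp only [herm, hv1, hv2, map_zero, mul_zero, zero_add, add_zero] at h
      rcases mul_eq_zero.1 h with h' | h'
      · exact h'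
      · exact absurd (by simpa using congrArg (starRingEnd ℂ) h') hv00
    have hww : herm w w = w 1 * (starRingEnd ℂ) (w 1) := by
      simp [herm, hw2]
    constructor
    · rw [hww, Complex.mul_conj]
      simp [Complex.normSq_nonneg]
    · intro hre
      have hw1 : w 1 = 0 := by
        rw [hww, Complex.mul_conj] at hre
        simpa [Complex.normSq_eq_zero] using hre
      refine ⟨w 0 / v 0, ?_⟩
      funext i
      fin_cases i <;> simp [hw1, hw2, hv1, hv2] <;> field_simp
  · set t : ℂ := w 2 / v 2 with ht
    set u : Fin 3 → ℂ := w - t • v with hu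
    have hu2 : u 2 = 0 := by
      simp only [hu, Pi.sub_apply, Pi.smul_apply, smul_eq_mul, ht]
      field_simp
      ring
    have huv : herm u v = 0 := by
      simp only [hu, herm, Pi.sub_apply, Pi.smul_apply, smul_eq_mul]
      have e1 : herm w v = 0 := hwv
      have e2 : herm v v = 0 := hvv
      simp only [herm] at e1 e2
      linear_combination e1 - t * e2
    have hvw : herm v w = 0 := by
      have : herm v w = (starRingEnd ℂ) (herm w v) := by simp [herm]; ring
      rw [this, hwv, map_zero]
    have huu : herm u u = herm w w := by
      simp only [hu, herm, Pi.sub_apply, Pi.smul_apply, smul_eq_mul, map_sub, _root_.map_mul]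
      have e1 : herm w v = 0 := hwv
      have e2 : herm v v = 0 := hvv
      have e3 : herm v w = 0 := hvw
      simp only [herm] at e1 e2 e3
      linear_combination (-(starRingEnd ℂ) t) * e1 - t * e3 + (t * (starRingEnd ℂ) t) * e2
    have hww1 : herm w w = u 1 * (starRingEnd ℂ) (u 1) := by
      rw [← huu]; simp [herm, hu2]
    constructor
    · rw [hww1, Complex.mul_conj]; simp [Complex.normSq_nonneg]
    · intro hre
      have hu1 : u 1 = 0 := by
        rw [hww1, Complex.mul_conj] at hre
        simpa [Complex.normSq_eq_zero] using hre
      have hu0 : u 0 = 0 := by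
        have h := huv
        simp only [herm, hu1, hu2, map_zero, mul_zero, zero_mul, add_zero, zero_add] at h
        rcases mul_eq_zero.1 h with h' | h'
        · exact h'
        · exact absurd (by simpa using congrArg (starRingEnd ℂ) h') hv2
      refine ⟨t, ?_⟩
      have h0 : u = 0 := by funext i; fin_cases i <;> assumption
      have h1 := congrArg (· + t • v) h0
      simpa [hu, sub_add_cancel] using h1

/-- Negative real part of the Hermitian triple product of two negative vectors
and a nonzero null vector. -/
lemma triple (z p v : Fin 3 → ℂ) (rz rp : ℝ) (hrz : rz < 0) (hrp : rp < 0)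
    (hz : herm z z = (rz : ℂ)) (hp : herm p p = (rp : ℂ)) (hv0 : v ≠ 0)
    (hvv : herm v v = 0) :
    (herm z p * herm p v * ((starRingEnd ℂ) (herm z v))).re < 0 := by
  set P := herm p v with hP
  set Zv := herm z v with hZv
  set Q := herm z p with hQ
  have hzv_ne : Zv ≠ 0 := by
    intro h0
    have := (key v z hv0 hvv (by rw [← hZv]; exact h0)).1
    rw [hz] at this
    simp at this
    linarith
  set w : Fin 3 → ℂ := P • z - Zv • p with hw
  have hwv : herm w v = 0 := by
    rw [hw, herm_sub_left, herm_smul_left, herm_smul_left, ← hP, ← hZv]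
    ring
  have hkey := (key v w hv0 hvv hwv).1
  set T := Q * P * (starRingEnd ℂ) Zv with hT
  have h1 : herm w w = P * (starRingEnd ℂ) P * (rz : ℂ) + Zv * (starRingEnd ℂ) Zv * (rp : ℂ)
      - (T + (starRingEnd ℂ) T) := by
    rw [hw, herm_sub_left, herm_smul_left, herm_smul_left, herm_sub_right, herm_sub_right,
      herm_smul_right, herm_smul_right, herm_smul_right, herm_smul_right, hz, hp]
    have hpz : herm p z = (starRingEnd ℂ) Q := by rw [hQ, ← herm_conj]
    rw [hpz]
    simp only [← hQ, hT, _root_.map_mul, Complex.conj_conj]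
    ring
  have h2 : (herm w w).re = Complex.normSq P * rz + Complex.normSq Zv * rp - 2 * T.re := by
    rw [h1]
    rw [Complex.mul_conj, Complex.mul_conj]
    simp only [Complex.sub_re, Complex.add_re, Complex.conj_re, ← Complex.ofReal_mul,
      Complex.ofReal_re]
    ring
  rw [h2] at hkey
  have hnP : 0 ≤ Complex.normSq P := Complex.normSq_nonneg P
  have hnZ : 0 < Complex.normSq Zv := Complex.normSq_pos.2 hzv_ne
  show T.re < 0
  nlinarith [mul_nonneg hnP (le_of_lt (neg_pos.2 hrz)), mul_pos hnZ (neg_pos.2 hrp)]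

/-- Phillips' disjointness result for the two bisectors associated to a
nontrivial unipotent isometry. -/
theorem stmt12 (A : Matrix (Fin 3) (Fin 3) ℂ)
    (hiso : Aᴴ * Jmat * A = Jmat) (huni : (A - 1) ^ 3 = 0) (hne : A ≠ 1)
    (p₀ : Fin 3 → ℂ) (hneg : ∃ r : ℝ, r < 0 ∧ herm p₀ p₀ = (r : ℂ)) :
    ¬ ∃ z : Fin 3 → ℂ, (∃ r : ℝ, r < 0 ∧ herm z z = (r : ℂ)) ∧
      ‖herm z p₀‖ = ‖herm z (A *ᵥ p₀)‖ ∧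
      ‖herm z p₀‖ = ‖herm z (A⁻¹ *ᵥ p₀)‖ := by
  obtain ⟨N, hA⟩ : ∃ N, A = N + 1 := ⟨A - 1, by rw [sub_add_cancel]⟩
  subst hA
  obtain ⟨r', hr', hpp⟩ := hneg
  rintro ⟨z, ⟨r, hr, hzz⟩, hb1, hb2⟩
  -- basic matrix identities
  have h3 : N * N * N = 0 := by
    have h := huni
    rw [add_sub_cancel_right, pow_succ, sq] at h
    exact h
  have e0 : Nᴴ * Jmat * N + Nᴴ * Jmat + Jmat * N + Jmat = Jmat := by
    calc Nᴴ * Jmat * N + Nᴴ * Jmat + Jmat * N + Jmat = (N + 1)ᴴ * Jmat * (N + 1) := by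
          simp only [conjTranspose_add, conjTranspose_one]; noncomm_ring
      _ = Jmat := hiso
  have h1 : Nᴴ * Jmat * N + Nᴴ * Jmat + Jmat * N = 0 := by
    have := e0
    rwa [add_eq_right] at this
  have hprod : (N + 1) * (1 - N + N * N) = 1 := by
    have e : (N + 1) * (1 - N + N * N) = 1 + N * N * N := by noncomm_ring
    rw [e, h3, add_zero]
  have hNJ : Nᴴ * Jmat = -(Jmat * N) + Jmat * (N * N) := by
    have e2 : Nᴴ * Jmat * (N + 1) = -(Jmat * N) := by
      have e : Nᴴ * Jmat * (N + 1) = (Nᴴ * Jmat * N + Nᴴ * Jmat + Jmat * N) - Jmat * N := by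
        noncomm_ring
      rw [e, h1, zero_sub]
    have e3 : Nᴴ * Jmat = Nᴴ * Jmat * ((N + 1) * (1 - N + N * N)) := by
      rw [hprod, mul_one]
    rw [e3, ← mul_assoc, e2]
    have e4 : -(Jmat * N) * (1 - N + N * N) =
        -(Jmat * N) + Jmat * (N * N) - Jmat * (N * N * N) := by noncomm_ring
    rw [e4, h3, Matrix.mul_zero, sub_zero]
  have hN2J : (Nᴴ * Nᴴ) * Jmat = Jmat * (N * N) := by
    have e5 : (Nᴴ * Nᴴ) * Jmat = Nᴴ * (Nᴴ * Jmat) := by rw [mul_assoc]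
    rw [e5, hNJ]
    have e6 : Nᴴ * (-(Jmat * N) + Jmat * (N * N)) =
        -((Nᴴ * Jmat) * N) + (Nᴴ * Jmat) * (N * N) := by noncomm_ring
    rw [e6, hNJ]
    have e7 : -((-(Jmat * N) + Jmat * (N * N)) * N) + (-(Jmat * N) + Jmat * (N * N)) * (N * N)
        = Jmat * (N * N) - (Jmat + Jmat) * (N * N * N) + Jmat * ((N * N * N) * N) := by
      noncomm_ring
    rw [e7, h3, Matrix.mul_zero, Matrix.zero_mul, Matrix.mul_zero, sub_zero, add_zero]
  set M : Matrix (Fin 3) (Fin 3) ℂ := N + N - N * N with hMdef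
  have hMJ : Mᴴ * Jmat = -(Jmat * M) := by
    have e8 : Mᴴ * Jmat = Nᴴ * Jmat + Nᴴ * Jmat - (Nᴴ * Nᴴ) * Jmat := by
      rw [hMdef]
      simp only [conjTranspose_add, conjTranspose_sub, conjTranspose_mul]
      noncomm_ring
    rw [e8, hNJ, hN2J, hMdef]
    noncomm_ring
  have hM2 : M * M = N * N + N * N + N * N + N * N := by
    have e : M * M = (N * N + N * N + N * N + N * N)
        + (N * N * N) * (N - (1 + 1 + 1 + 1)) := by rw [hMdef]; noncomm_ring
    rw [e, h3, Matrix.zero_mul, add_zero]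
  have hM3 : M * M * M = 0 := by
    have e : M * M * M = (N * N * N) * ((1 + 1 - N) * ((1 + 1 - N) * (1 + 1 - N))) := by
      rw [hMdef]; noncomm_ring
    rw [e, h3, Matrix.zero_mul]
  have hAinv : (N + 1)⁻¹ = 1 - N + N * N := inv_eq_right_inv hprod
  have S1 : ∀ x y, herm (M *ᵥ x) y = - herm x (M *ᵥ y) := skew M hMJ
  have S1' : ∀ x y, herm x (M *ᵥ y) = - herm (M *ᵥ x) y := by
    intro x y; rw [S1, neg_neg]
  -- the distinguished null vector
  set v : Fin 3 → ℂ := (N * N) *ᵥ p₀ with hvdef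
  set w₁ : Fin 3 → ℂ := M *ᵥ p₀ with hw₁def
  have hMMp : (M * M) *ᵥ p₀ = v + v + v + v := by
    rw [hM2, add_mulVec, add_mulVec, add_mulVec]
  have sqnull : ∀ x, herm ((M * M) *ᵥ x) ((M * M) *ᵥ x) = 0 := by
    intro x
    have e : (M * M) *ᵥ x = M *ᵥ (M *ᵥ x) := (mulVec_mulVec x M M).symm
    rw [e, S1, mulVec_mulVec, mulVec_mulVec, hM3, zero_mulVec, herm_zero_right, neg_zero]
  have hvnull : herm v v = 0 := by
    have t1 : herm ((M * M) *ᵥ p₀) ((M * M) *ᵥ p₀) = 0 := sqnull p₀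
    rw [hMMp] at t1
    have t2 : herm (v + v + v + v) (v + v + v + v) = 16 * herm v v := by
      simp [herm]; ring
    rw [t2] at t1
    have h16 : (16 : ℂ) ≠ 0 := by norm_num
    exact (mul_eq_zero.1 t1).resolve_left h16
  have hw1v : herm w₁ v = 0 := by
    have a0 : herm w₁ (M *ᵥ (M *ᵥ p₀)) = 0 := by
      rw [S1', S1']
      simp only [hw₁def, mulVec_mulVec]
      have hM3' : M * (M * M) = 0 := by rw [← mul_assoc]; exact hM3
      rw [hM3', zero_mulVec, herm_zero_left]
      simp
    rw [mulVec_mulVec, hMMp] at a0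
    have a1 : herm w₁ (v + v + v + v) = 4 * herm w₁ v := by simp [herm]; ring
    rw [a1] at a0
    have h4 : (4 : ℂ) ≠ 0 := by norm_num
    exact (mul_eq_zero.1 a0).resolve_left h4
  have hw1w1 : herm w₁ w₁ = -(4 * herm p₀ v) := by
    have a0 : herm w₁ w₁ = - herm p₀ (M *ᵥ (M *ᵥ p₀)) := by
      rw [hw₁def]; rw [S1]
    rw [mulVec_mulVec, hMMp] at a0
    have a1 : herm p₀ (v + v + v + v) = 4 * herm p₀ v := by simp [herm]; ring
    rw [a1] at a0
    exact a0
  -- translate the bisector conditions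
  have hApz : herm z ((N + 1) *ᵥ p₀) = herm z p₀ + herm z (N *ᵥ p₀) := by
    rw [add_mulVec, one_mulVec, herm_add_right]; ring
  have hAipz : herm z ((N + 1)⁻¹ *ᵥ p₀) =
      herm z p₀ - herm z (N *ᵥ p₀) + herm z v := by
    rw [hAinv, add_mulVec, sub_mulVec, one_mulVec, herm_add_right, herm_sub_right, hvdef]
  rw [hApz] at hb1
  rw [hAipz] at hb2
  have E1 : Complex.normSq (herm z p₀ + herm z (N *ᵥ p₀)) = Complex.normSq (herm z p₀) := by
    rw [← Complex.sq_norm, ← Complex.sq_norm (herm z p₀), ← hb1]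
  have E2 : Complex.normSq (herm z p₀ - herm z (N *ᵥ p₀) + herm z v)
      = Complex.normSq (herm z p₀) := by
    rw [← Complex.sq_norm, ← Complex.sq_norm (herm z p₀), ← hb2]
  by_cases hγ : herm z v = 0
  · -- degenerate case : herm z v = 0, must have herm z (N *ᵥ p₀) = 0 as well
    have e2' := E2
    rw [hγ, add_zero] at e2'
    have hβ : herm z (N *ᵥ p₀) = 0 := by
      have e1' := E1
      simp only [Complex.normSq_apply, Complex.add_re, Complex.add_im, Complex.sub_re,
        Complex.sub_im] at e1' e2'
      have hsum : (herm z (N *ᵥ p₀)).re * (herm z (N *ᵥ p₀)).re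
          + (herm z (N *ᵥ p₀)).im * (herm z (N *ᵥ p₀)).im = 0 := by
        linear_combination (1/2 : ℝ) * e1' + (1/2 : ℝ) * e2'
      obtain ⟨hre0, him0⟩ := (add_eq_zero_iff_of_nonneg (mul_self_nonneg _)
        (mul_self_nonneg _)).1 hsum
      exact Complex.ext (by simpa using mul_self_eq_zero.1 hre0)
        (by simpa using mul_self_eq_zero.1 him0)
    have hMp0 : herm z w₁ = 0 := by
      rw [hw₁def, hMdef, sub_mulVec, add_mulVec, herm_sub_right, herm_add_right, hβ, ← hvdef, hγ]
      ring
    by_cases hv0 : v = 0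
    · by_cases hw10 : w₁ = 0
      · -- M *ᵥ p₀ = 0 : derive a contradiction from nontriviality
        have hMne : M ≠ 0 := by
          intro h0
          have h0' : N + N - N * N = 0 := by rw [← hMdef]; exact h0
          have hNN : N * N = 0 := by
            have e : (N + N - N * N) * N = 0 := by rw [h0', Matrix.zero_mul]
            have e' : (N + N - N * N) * N = N * N + N * N - N * N * N := by noncomm_ring
            rw [e', h3, sub_zero] at e
            have h2 : (2 : ℂ) • (N * N) = 0 := by rw [two_smul]; exact e
            simpa using (smul_eq_zero.1 h2).resolve_left (by norm_num)
          have hNN2 : N + N = 0 := by rw [hNN] at h0'; simpa using h0'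
          have hN00 : N = 0 := by
            have h2 : (2 : ℂ) • N = 0 := by rw [two_smul]; exact hNN2
            simpa using (smul_eq_zero.1 h2).resolve_left (by norm_num)
          exact hne (by rw [hN00, zero_add])
        obtain ⟨x, hx⟩ : ∃ x, M *ᵥ x ≠ 0 := by
          by_contra hall
          push_neg at hall
          apply hMne
          ext i j
          have hc := congrFun (hall (Pi.single j 1)) i
          rw [mulVec_single] at hc
          simpa using hc
        have hporth : ∀ y, herm p₀ (M *ᵥ y) = 0 := by
          intro y
          have hs := S1 p₀ y
          rw [← hw₁def, hw10, herm_zero_left] at hs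
          exact neg_eq_zero.1 hs.symm
        by_cases hMM : ∃ x₂, (M * M) *ᵥ x₂ ≠ 0
        · obtain ⟨x₂, hx₂⟩ := hMM
          have hwnull : herm ((M * M) *ᵥ x₂) ((M * M) *ᵥ x₂) = 0 := sqnull x₂
          have hworth : herm p₀ ((M * M) *ᵥ x₂) = 0 := by
            rw [← mulVec_mulVec]; exact hporth _
          have hkp := (key ((M * M) *ᵥ x₂) p₀ hx₂ hwnull hworth).1
          rw [hpp] at hkp
          simp at hkp
          linarith
        · push_neg at hMM
          have hwnull : herm (M *ᵥ x) (M *ᵥ x) = 0 := by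
            rw [S1, mulVec_mulVec, hMM x, herm_zero_right, neg_zero]
          have hworth : herm p₀ (M *ᵥ x) = 0 := hporth x
          have hkp := (key (M *ᵥ x) p₀ hx hwnull hworth).1
          rw [hpp] at hkp
          simp at hkp
          linarith
      · -- v = 0 but w₁ ≠ 0 : w₁ is null and orthogonal to z
        have hwnull : herm w₁ w₁ = 0 := by
          rw [hw1w1, hv0, herm_zero_right]; ring
        have hkp := (key w₁ z hw10 hwnull hMp0).1
        rw [hzz] at hkp
        simp at hkp
        linarith
    · -- v ≠ 0 : v is null and orthogonal to z
      have hkp := (key v z hv0 hvnull hγ).1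
      rw [hzz] at hkp
      simp at hkp
      linarith
  · -- main case : herm z v ≠ 0
    have hv0 : v ≠ 0 := by
      intro h0
      exact hγ (by rw [h0, herm_zero_right])
    set s : ℝ := (herm w₁ w₁).re with hsdef
    have hs' : (s : ℂ) = herm w₁ w₁ :=
      Complex.conj_eq_iff_re.1 (herm_conj w₁ w₁).symm
    have hsnn : 0 ≤ s := (key v w₁ hv0 hvnull hw1v).1
    have hsne : s ≠ 0 := by
      intro h0
      obtain ⟨t, htw⟩ := (key v w₁ hv0 hvnull hw1v).2 h0
      have hv4 : v + v + v + v = 0 := by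
        rw [← hMMp, ← mulVec_mulVec, ← hw₁def, htw, mulVec_smul]
        have hMv : M *ᵥ v = 0 := by
          have e : M * (N * N) = N * N * N + N * N * N - (N * N * N) * N := by
            rw [hMdef]; noncomm_ring
          rw [hvdef, mulVec_mulVec, e, h3]
          simp
        rw [hMv, smul_zero]
      apply hv0
      funext i
      have hvi := congrFun hv4 i
      simp only [Pi.add_apply, Pi.zero_apply] at hvi
      show v i = 0
      linear_combination (1/4 : ℂ) * hvi
    have hspos : 0 < s := lt_of_le_of_ne hsnn (Ne.symm hsne)
    have hpv : herm p₀ v = ((-(s/4) : ℝ) : ℂ) := by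
      push_cast
      linear_combination (1/4 : ℂ) * (hs'.trans hw1w1)
    have htrip := triple z p₀ v r r' hr hr' hzz hpp hv0 hvnull
    rw [hpv] at htrip
    have hre : (herm z p₀ * ((-(s/4) : ℝ) : ℂ) * (starRingEnd ℂ) (herm z v)).re
        = -(s/4) * (herm z p₀ * (starRingEnd ℂ) (herm z v)).re := by
      have e : herm z p₀ * ((-(s/4) : ℝ) : ℂ) * (starRingEnd ℂ) (herm z v)
          = ((-(s/4) : ℝ) : ℂ) * (herm z p₀ * (starRingEnd ℂ) (herm z v)) := by ring
      rw [e, Complex.mul_re, Complex.ofReal_re, Complex.ofReal_im]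
      ring
    rw [hre] at htrip
    have hQγ : 0 < (herm z p₀ * (starRingEnd ℂ) (herm z v)).re := by nlinarith
    have e1 := E1
    have e2 := E2
    simp only [Complex.normSq_apply, Complex.add_re, Complex.add_im, Complex.sub_re,
      Complex.sub_im] at e1 e2
    rw [Complex.mul_re, Complex.conj_re, Complex.conj_im] at hQγ
    nlinarith [sq_nonneg ((herm z (N *ᵥ p₀)).re - (herm z v).re),
      sq_nonneg ((herm z (N *ᵥ p₀)).im - (herm z v).im),
      sq_nonneg (herm z (N *ᵥ p₀)).re, sq_nonneg (herm z (N *ᵥ p₀)).im]
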